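/- Twisted multiplicativity of Kloosterman sums: if c₁ and c₂ are coprime positive integers, then S(n, m; c₁c₂) = S(n·c̄₂, m·c̄₂; c₁) · S(n·c̄₁, m·c̄₁; c₂), where c̄₂ is an inverse of c₂ modulo c₁ and c̄₁ is an inverse of c₁ modulo c₂. -/

import Mathlib

open Complex Finset

/-- `e(x) = exp(2πix)`. -/
noncomputable def e (x : ℝ) : ℂ := Complex.exp (2 * Real.pi * Complex.I * x)

/-- Additive character `x ↦ e(x/c)` on `ZMod c`. -/
noncomputable def eZMod (c : ℕ) [NeZero c] (x : ZMod c) : ℂ := e ((x.val : ℝ) / c)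

/-- Kloosterman sum `S(n,m;c) = ∑*_{h mod c} e((nh + m·h̄)/c)`. -/
noncomputable def kloos (c : ℕ) [NeZero c] (n m : ℤ) : ℂ :=
  ∑ h : (ZMod c)ˣ,
    eZMod c ((n : ZMod c) * (h : ZMod c) + (m : ZMod c) * ((h⁻¹ : (ZMod c)ˣ) : ZMod c))

lemma e_add (x y : ℝ) : e (x + y) = e x * e y := by
  simp [e, mul_add, Complex.exp_add]

lemma e_int (k : ℤ) : e k = 1 := by
  rw [e, show 2 * (Real.pi:ℂ) * Complex.I * (k:ℝ) = k * (2 * Real.pi * Complex.I) by push_cast; ring]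
  exact Complex.exp_int_mul_two_pi_mul_I k

lemma e_add_int (x : ℝ) (k : ℤ) : e (x + k) = e x := by
  rw [e_add, e_int, mul_one]

lemma eZMod_intCast (c : ℕ) [NeZero c] (x : ℤ) : eZMod c (x : ZMod c) = e (x / c) := by
  have hc : (c : ℝ) ≠ 0 := Nat.cast_ne_zero.mpr (NeZero.ne c)
  have hv : (((x : ZMod c)).val : ℤ) = x % c := ZMod.val_intCast x
  have hz : (((x : ZMod c)).val : ℤ) = x - c * (x / c) := by rw [hv, Int.emod_def]
  have hr : (((x : ZMod c)).val : ℝ) = (x : ℝ) - c * ((x / (c:ℤ) : ℤ) : ℝ) := by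
    exact_mod_cast hz
  have : (x : ℝ) / c = (((x : ZMod c)).val : ℝ) / c + (x / (c:ℤ) : ℤ) := by
    rw [hr]; field_simp; ring
  rw [eZMod, this, e_add_int]

lemma eZMod_split (c₁ c₂ : ℕ) [NeZero c₁] [NeZero c₂] (hco : Nat.Coprime c₁ c₂)
    (c1bar c2bar : ℤ)
    (h1 : (c₂ : ℤ) ∣ (c₁ * c1bar - 1)) (h2 : (c₁ : ℤ) ∣ (c₂ * c2bar - 1)) (a : ℤ) :
    eZMod (c₁ * c₂) (a : ZMod (c₁ * c₂))
      = eZMod c₁ ((a * c2bar : ℤ) : ZMod c₁) * eZMod c₂ ((a * c1bar : ℤ) : ZMod c₂) := by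
  have hd : ((c₁ : ℤ) * c₂) ∣ (c₂ * c2bar + c₁ * c1bar - 1) := by
    refine (Nat.isCoprime_iff_coprime.mpr hco).mul_dvd ?_ ?_
    · have : (c₁:ℤ) ∣ c₁ * c1bar := dvd_mul_right _ _
      have := dvd_add h2 this
      simpa [sub_add_eq_add_sub] using this
    · have : (c₂:ℤ) ∣ c₂ * c2bar := dvd_mul_right _ _
      have := dvd_add this h1
      simpa [add_sub_assoc] using this
  obtain ⟨k, hk⟩ := hd.mul_left a
  rw [eZMod_intCast, eZMod_intCast, eZMod_intCast, ← e_add]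
  have hc1 : (c₁ : ℝ) ≠ 0 := Nat.cast_ne_zero.mpr (NeZero.ne c₁)
  have hc2 : (c₂ : ℝ) ≠ 0 := Nat.cast_ne_zero.mpr (NeZero.ne c₂)
  have : ((a * c2bar : ℤ) : ℝ) / c₁ + ((a * c1bar : ℤ) : ℝ) / c₂
      = (a : ℝ) / ((c₁ : ℕ) * c₂ : ℕ) + k := by
    have hkR : (a : ℝ) * (c₂ * c2bar + c₁ * c1bar - 1) = (c₁ * c₂ : ℝ) * k := by
      exact_mod_cast congrArg (fun z : ℤ => (z : ℝ)) hk
    field_simp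
    push_cast at hkR ⊢
    linear_combination ((c₁ : ℝ) * c₂) * hkR
  rw [this, e_add_int]

/-- Twisted multiplicativity: for coprime `c₁, c₂`,
`S(n,m;c₁c₂) = S(n·c̄₂, m·c̄₂; c₁)·S(n·c̄₁, m·c̄₁; c₂)` where `c̄₂` inverts `c₂` mod `c₁`
and `c̄₁` inverts `c₁` mod `c₂`. -/
theorem stmt4 (c₁ c₂ : ℕ) [NeZero c₁] [NeZero c₂] (hco : Nat.Coprime c₁ c₂)
    (n m c1bar c2bar : ℤ)
    (h1 : (c₂ : ℤ) ∣ (c₁ * c1bar - 1)) (h2 : (c₁ : ℤ) ∣ (c₂ * c2bar - 1)) :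
    kloos (c₁ * c₂) n m
      = kloos c₁ (n * c2bar) (m * c2bar) * kloos c₂ (n * c1bar) (m * c1bar) := by
  classical
  let E : (ZMod (c₁ * c₂))ˣ ≃* (ZMod c₁)ˣ × (ZMod c₂)ˣ :=
    (Units.mapEquiv (ZMod.chineseRemainder hco).toMulEquiv).trans MulEquiv.prodUnits
  have hE1 : ∀ h : (ZMod (c₁ * c₂))ˣ,
      ((E h).1 : ZMod c₁) = ZMod.cast (h : ZMod (c₁ * c₂)) := by
    intro h
    simp [E, ZMod.chineseRemainder, MulEquiv.prodUnits, Units.mapEquiv]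
  have hE2 : ∀ h : (ZMod (c₁ * c₂))ˣ,
      ((E h).2 : ZMod c₂) = ZMod.cast (h : ZMod (c₁ * c₂)) := by
    intro h
    simp [E, ZMod.chineseRemainder, MulEquiv.prodUnits, Units.mapEquiv]
  rw [kloos, kloos, kloos, Finset.sum_mul_sum]
  have main : ∀ h : (ZMod (c₁ * c₂))ˣ,
      eZMod (c₁ * c₂) ((n : ZMod (c₁*c₂)) * h + (m : ZMod (c₁*c₂)) * (h⁻¹ : (ZMod (c₁*c₂))ˣ))
      = eZMod c₁ (((n*c2bar : ℤ) : ZMod c₁) * (E h).1 + ((m*c2bar : ℤ) : ZMod c₁) * ((E h).1⁻¹ : (ZMod c₁)ˣ)) *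
        eZMod c₂ (((n*c1bar : ℤ) : ZMod c₂) * (E h).2 + ((m*c1bar : ℤ) : ZMod c₂) * ((E h).2⁻¹ : (ZMod c₂)ˣ)) := ?_
  · calc ∑ h : (ZMod (c₁ * c₂))ˣ, eZMod (c₁ * c₂) ((n : ZMod (c₁*c₂)) * h + (m : ZMod (c₁*c₂)) * (h⁻¹ : (ZMod (c₁*c₂))ˣ))
        = ∑ h : (ZMod (c₁ * c₂))ˣ, (fun p : (ZMod c₁)ˣ × (ZMod c₂)ˣ =>
            eZMod c₁ (((n*c2bar : ℤ) : ZMod c₁) * p.1 + ((m*c2bar : ℤ) : ZMod c₁) * (p.1⁻¹ : (ZMod c₁)ˣ)) *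
            eZMod c₂ (((n*c1bar : ℤ) : ZMod c₂) * p.2 + ((m*c1bar : ℤ) : ZMod c₂) * (p.2⁻¹ : (ZMod c₂)ˣ))) (E.toEquiv h) :=
          Finset.sum_congr rfl (fun h _ => main h)
      _ = ∑ p : (ZMod c₁)ˣ × (ZMod c₂)ˣ,
            eZMod c₁ (((n*c2bar : ℤ) : ZMod c₁) * p.1 + ((m*c2bar : ℤ) : ZMod c₁) * (p.1⁻¹ : (ZMod c₁)ˣ)) *
            eZMod c₂ (((n*c1bar : ℤ) : ZMod c₂) * p.2 + ((m*c1bar : ℤ) : ZMod c₂) * (p.2⁻¹ : (ZMod c₂)ˣ)) :=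
          Equiv.sum_comp E.toEquiv (fun p : (ZMod c₁)ˣ × (ZMod c₂)ˣ =>
            eZMod c₁ (((n*c2bar : ℤ) : ZMod c₁) * p.1 + ((m*c2bar : ℤ) : ZMod c₁) * (p.1⁻¹ : (ZMod c₁)ˣ)) *
            eZMod c₂ (((n*c1bar : ℤ) : ZMod c₂) * p.2 + ((m*c1bar : ℤ) : ZMod c₂) * (p.2⁻¹ : (ZMod c₂)ˣ)))
      _ = _ := by rw [Fintype.sum_prod_type]
  intro h
  set a : ℤ := n * ((h : ZMod (c₁*c₂)).val : ℤ) + m * (((h⁻¹ : (ZMod (c₁*c₂))ˣ) : ZMod (c₁*c₂)).val : ℤ) with ha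
  have key : (n : ZMod (c₁*c₂)) * h + (m : ZMod (c₁*c₂)) * (h⁻¹ : (ZMod (c₁*c₂))ˣ)
      = ((a : ℤ) : ZMod (c₁*c₂)) := by
    push_cast [ha, ZMod.natCast_val, ZMod.intCast_cast, ZMod.cast_id]
    rfl
  have c1eq : ((a * c2bar : ℤ) : ZMod c₁)
      = ((n*c2bar : ℤ) : ZMod c₁) * ((E h).1 : ZMod c₁)
        + ((m*c2bar : ℤ) : ZMod c₁) * (((E h).1)⁻¹ : (ZMod c₁)ˣ) := by
    have hinv : (((E h).1)⁻¹ : (ZMod c₁)ˣ) = (E (h⁻¹)).1 := by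
      rw [map_inv]; rfl
    rw [hinv, hE1, hE1, ha]
    push_cast [ZMod.natCast_val, ZMod.intCast_cast]
    ring
  have c2eq : ((a * c1bar : ℤ) : ZMod c₂)
      = ((n*c1bar : ℤ) : ZMod c₂) * ((E h).2 : ZMod c₂)
        + ((m*c1bar : ℤ) : ZMod c₂) * (((E h).2)⁻¹ : (ZMod c₂)ˣ) := by
    have hinv : (((E h).2)⁻¹ : (ZMod c₂)ˣ) = (E (h⁻¹)).2 := by
      rw [map_inv]; rfl
    rw [hinv, hE2, hE2, ha]
    push_cast [ZMod.natCast_val, ZMod.intCast_cast]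
    ring
  rw [key, eZMod_split c₁ c₂ hco c1bar c2bar h1 h2 a, c1eq, c2eq]
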